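/- Let P⁺ and P⁻ be probability measures on a measurable space with P⁺ ≪ P⁻. Let p > 1 and c > 0, and suppose there exists α₀ > p/(p−1) with ∫ (dP⁺/dP⁻)^{α₀} dP⁻ < ∞. Then for any sequence of measurable sets (A_n)_{n≥1} satisfying P⁻(A_n) ≤ c·n^{−p} for all n, the series ∑_{n=1}^∞ P⁺(A_n) converges. In particular, bounded cumulative risk under any power-law schedule forces bounded cumulative utility: no sequence of classifiers can have ∑ δ_n < ∞ with δ_n = O(n^{−p}) while ∑ TPR_n = ∞. -/

import Mathlib

open MeasureTheory
open scoped ENNReal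

/-- Safety–utility impossibility: if `P ≪ Q`, `p > 1`, `c > 0`, and the Rényi
integral `∫ (dP/dQ)^{α₀} dQ` is finite for some `α₀ > p/(p-1)`, then for any
sequence of measurable acceptance regions `A n` (indexed so that step `n ≥ 1`
corresponds to `A (n-1)`) whose false acceptance rates obey the power-law
schedule `Q (A n) ≤ c · n^{-p}`, the total true positive rate `∑ P (A n)` is
finite: bounded cumulative risk forces bounded cumulative utility. -/
theorem classification_impossibility_power_law {Ω : Type*} [MeasurableSpace Ω]
    (P Q : Measure Ω) [IsProbabilityMeasure P] [IsProbabilityMeasure Q]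
    (hac : P ≪ Q) (p c : ℝ) (hp : 1 < p) (hc : 0 < c)
    (α₀ : ℝ) (hα₀ : p / (p - 1) < α₀)
    (hfin : ∫⁻ x, (P.rnDeriv Q x) ^ α₀ ∂Q ≠ ∞)
    (A : ℕ → Set Ω) (hA : ∀ n, MeasurableSet (A n))
    (hδ : ∀ n : ℕ, Q (A n) ≤ ENNReal.ofReal (c * ((n : ℝ) + 1) ^ (-p))) :
    ∑' n : ℕ, P (A n) ≠ ∞ := by
  have hp1 : (0:ℝ) < p - 1 := by linarith
  have hα1 : 1 < α₀ := lt_trans (by rw [lt_div_iff₀ hp1]; nlinarith) hα₀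
  set β : ℝ := α₀ / (α₀ - 1) with hβdef
  have hconj : α₀.HolderConjugate β := Real.HolderConjugate.conjExponent hα1
  have hβpos : 0 < β := hconj.symm.pos
  have hα0 : (0:ℝ) < α₀ := hconj.pos
  -- key exponent condition : p / β > 1
  have hs : 1 < p / β := by
    rw [hβdef, div_div_eq_mul_div, lt_div_iff₀ hα0]
    have : p < α₀ * (p - 1) := (div_lt_iff₀ hp1).mp hα₀
    nlinarith
  set M : ℝ≥0∞ := (∫⁻ x, (P.rnDeriv Q x) ^ α₀ ∂Q) ^ (1/α₀) with hMdef
  have hM : M ≠ ∞ := ENNReal.rpow_ne_top_of_nonneg (by positivity) hfin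
  have hf : AEMeasurable (P.rnDeriv Q) Q := (Measure.measurable_rnDeriv P Q).aemeasurable
  -- Hölder bound: P (A n) ≤ M * Q (A n) ^ (1/β)
  have hPA : ∀ n, P (A n) ≤ M * Q (A n) ^ (1/β) := by
    intro n
    have hg : AEMeasurable ((A n).indicator (fun _ => (1:ℝ≥0∞))) Q :=
      ((measurable_const).indicator (hA n)).aemeasurable
    have holder := ENNReal.lintegral_mul_le_Lp_mul_Lq Q hconj hf hg
    have h1 : ∫⁻ x, ((P.rnDeriv Q) * (A n).indicator (fun _ => (1:ℝ≥0∞))) x ∂Q = P (A n) := by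
      have : ∀ x, ((P.rnDeriv Q) * (A n).indicator (fun _ => (1:ℝ≥0∞))) x
          = (A n).indicator (P.rnDeriv Q) x := by
        intro x
        by_cases hx : x ∈ A n <;> simp [hx]
      rw [lintegral_congr this, lintegral_indicator (hA n)]
      conv_rhs => rw [← Measure.withDensity_rnDeriv_eq P Q hac]
      rw [withDensity_apply _ (hA n)]
    have h2 : ∫⁻ x, ((A n).indicator (fun _ => (1:ℝ≥0∞)) x) ^ β ∂Q = Q (A n) := by
      have : ∀ x, ((A n).indicator (fun _ => (1:ℝ≥0∞)) x) ^ β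
          = (A n).indicator (fun _ => (1:ℝ≥0∞)) x := by
        intro x
        by_cases hx : x ∈ A n <;>
          simp [Set.indicator_apply, hx, ENNReal.zero_rpow_of_pos hβpos]
      rw [lintegral_congr this, lintegral_indicator (hA n), setLIntegral_one]
    rw [h1] at holder
    rw [h2] at holder
    exact holder
  -- the bounding series
  have hbound : ∀ n : ℕ, P (A n)
      ≤ M * ENNReal.ofReal (c ^ (1/β) * ((n : ℝ) + 1) ^ (-(p/β))) := by
    intro n
    refine le_trans (hPA n) (mul_le_mul_right ?_ M)
    have hn1 : (0:ℝ) ≤ (n:ℝ) + 1 := by positivity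
    have hcn : (0:ℝ) ≤ c * ((n : ℝ) + 1) ^ (-p) := by positivity
    calc Q (A n) ^ (1/β) ≤ (ENNReal.ofReal (c * ((n : ℝ) + 1) ^ (-p))) ^ (1/β) :=
          ENNReal.rpow_le_rpow (hδ n) (by positivity)
      _ = ENNReal.ofReal ((c * ((n : ℝ) + 1) ^ (-p)) ^ (1/β)) :=
          ENNReal.ofReal_rpow_of_nonneg hcn (by positivity)
      _ = ENNReal.ofReal (c ^ (1/β) * ((n : ℝ) + 1) ^ (-(p/β))) := by
          rw [Real.mul_rpow hc.le (by positivity), ← Real.rpow_mul hn1, neg_mul, mul_one_div]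
  -- summability of the real bounding series
  have hsum : Summable (fun n : ℕ => c ^ (1/β) * ((n : ℝ) + 1) ^ (-(p/β))) := by
    apply Summable.mul_left
    have h0 : Summable (fun n : ℕ => (n : ℝ) ^ (-(p/β))) :=
      Real.summable_nat_rpow.mpr (by linarith)
    have := (summable_nat_add_iff 1).mpr h0
    refine this.congr fun n => ?_
    push_cast
    ring_nf
  have hnonneg : ∀ n : ℕ, 0 ≤ c ^ (1/β) * ((n : ℝ) + 1) ^ (-(p/β)) := by
    intro n; positivity
  have htsum : ∑' n : ℕ, ENNReal.ofReal (c ^ (1/β) * ((n : ℝ) + 1) ^ (-(p/β))) ≠ ∞ := by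
    rw [← ENNReal.ofReal_tsum_of_nonneg hnonneg hsum]
    exact ENNReal.ofReal_ne_top
  refine ne_top_of_le_ne_top ?_ (ENNReal.tsum_le_tsum hbound)
  rw [ENNReal.tsum_mul_left]
  exact ENNReal.mul_ne_top hM htsum
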